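/- arXiv:1903.10319 — 2 statements merged into one kernel-verified Lean document; each statement's English description precedes it below -/
import Mathlib

section
/- For every integer k ≥ 4, the graph (K_3 ∪ \overline{K}_{k-4}) ∨ T(2k-2,2) contains Q(2,k) = K_1 ∨ T(2k,2) as a subgraph. -/
open SimpleGraph

universe u v

/-- `F` embeds into `G` as a subgraph (injective graph homomorphism). -/
def Embeds {α : Type u} {β : Type v} (F : SimpleGraph α) (G : SimpleGraph β) : Prop :=
  ∃ f : α ↪ β, ∀ a b, F.Adj a b → G.Adj (f a) (f b)

/-- Join of two graphs: all cross edges added. -/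
def join {α β : Type*} (G : SimpleGraph α) (H : SimpleGraph β) : SimpleGraph (α ⊕ β) where
  Adj x y :=
    match x, y with
    | Sum.inl a, Sum.inl b => G.Adj a b
    | Sum.inr a, Sum.inr b => H.Adj a b
    | Sum.inl _, Sum.inr _ => True
    | Sum.inr _, Sum.inl _ => True
  symm := by
    constructor
    rintro (a | a) (b | b) h
    · exact G.adj_symm h
    · trivial
    · trivial
    · exact H.adj_symm h
  loopless := by
    constructor
    rintro (a | a) h
    · exact G.irrefl h
    · exact H.irrefl h

/-- Disjoint union of two graphs. -/
def dUnion {α β : Type*} (G : SimpleGraph α) (H : SimpleGraph β) : SimpleGraph (α ⊕ β) where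
  Adj x y :=
    match x, y with
    | Sum.inl a, Sum.inl b => G.Adj a b
    | Sum.inr a, Sum.inr b => H.Adj a b
    | Sum.inl _, Sum.inr _ => False
    | Sum.inr _, Sum.inl _ => False
  symm := by
    constructor
    rintro (a | a) (b | b) h
    · exact G.adj_symm h
    · exact h.elim
    · exact h.elim
    · exact H.adj_symm h
  loopless := by
    constructor
    rintro (a | a) h
    · exact G.irrefl h
    · exact H.irrefl h

/-- The star `S_{k+1}` on `k+1` vertices, with center `0`. -/
def starG (k : ℕ) : SimpleGraph (Fin (k + 1)) :=
  SimpleGraph.fromRel (fun i _ => i = 0)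

/-- The matching `M_{2k}` consisting of `k` disjoint edges on `2k` vertices. -/
def matchingG (k : ℕ) : SimpleGraph (Fin (2 * k)) :=
  SimpleGraph.fromRel (fun i j => (i : ℕ) / 2 = (j : ℕ) / 2)

/-- `Q(p,k) = K₁ ∨ T(pk,p)`. -/
def Q (p k : ℕ) : SimpleGraph (Unit ⊕ Fin (p * k)) :=
  join (⊤ : SimpleGraph Unit) (SimpleGraph.turanGraph (p * k) p)

/-- Number of edges of a graph. -/
noncomputable def eCount {α : Type*} (G : SimpleGraph α) : ℕ := Nat.card G.edgeSet

/-- `t(n,p)`, the number of edges of the Turán graph `T(n,p)`. -/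
noncomputable def tur (n p : ℕ) : ℕ := eCount (SimpleGraph.turanGraph n p)

/-- Degree of a vertex, instance-free. -/
noncomputable def ndeg {α : Type*} (G : SimpleGraph α) (v : α) : ℕ := Nat.card (G.neighborSet v)

/-- An edge-coloring `c` of `K_n` admits a rainbow copy of `F`. -/
def HasRainbow {n : ℕ} {β : Type*} (c : Sym2 (Fin n) → ℕ) (F : SimpleGraph β) : Prop :=
  ∃ f : β ↪ Fin n, ∀ a b a' b', F.Adj a b → F.Adj a' b' →
    c s(f a, f b) = c s(f a', f b') → s(a, b) = s(a', b')

/-- Number of colors used on the edges of `K_n` by the coloring `c`. -/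
noncomputable def colorsUsed (n : ℕ) (c : Sym2 (Fin n) → ℕ) : ℕ :=
  Nat.card (c '' (⊤ : SimpleGraph (Fin n)).edgeSet)

/-- The Turán graph `T(vp,p)` with a matching of `k-1` edges added inside the part `0`
and one extra edge added inside the part `1`. -/
def turanMM (w p k : ℕ) : SimpleGraph (Fin (w * p)) :=
  SimpleGraph.fromRel (fun i j =>
    ((i : ℕ) % p ≠ (j : ℕ) % p)
    ∨ ((i : ℕ) % p = 0 ∧ (j : ℕ) % p = 0 ∧ (i : ℕ) / p / 2 = (j : ℕ) / p / 2 ∧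
        (i : ℕ) / p < 2 * (k - 1))
    ∨ ((i : ℕ) % p = 1 ∧ (j : ℕ) % p = 1 ∧ (i : ℕ) / p < 2 ∧ (j : ℕ) / p < 2))
theorem stmt1 (k : ℕ) (hk : 4 ≤ k) :
    Embeds (Q 2 k)
      (join (dUnion (⊤ : SimpleGraph (Fin 3)) (⊥ : SimpleGraph (Fin (k - 4))))
        (SimpleGraph.turanGraph (2 * k - 2) 2)) := by
  classical
  set f : Unit ⊕ Fin (2 * k) → (Fin 3 ⊕ Fin (k - 4)) ⊕ Fin (2 * k - 2) :=
    fun x => match x with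
    | Sum.inl _ => Sum.inl (Sum.inl 0)
    | Sum.inr i =>
      if (i : ℕ) = 0 then Sum.inl (Sum.inl 1)
      else if (i : ℕ) = 1 then Sum.inl (Sum.inl 2)
      else Sum.inr ⟨(i : ℕ) - 2, by have := i.isLt; omega⟩
    with hf
  have hinj : Function.Injective f := by
    rintro (x | i) (y | j) h
    · rfl
    · simp only [hf] at h
      split_ifs at h with h0 h1 <;> simp_all <;> omega
    · simp only [hf] at h
      split_ifs at h with h0 h1 <;> simp_all <;> omega
    · simp only [hf] at h
      split_ifs at h with h0 h1 h2 h3 h4 h5 <;>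
        simp_all [Fin.ext_iff] <;> omega
  refine ⟨⟨f, hinj⟩, ?_⟩
  rintro (a | i) (b | j) hadj
  · exact absurd (Subsingleton.elim a b) hadj
  · simp only [Function.Embedding.coeFn_mk, hf]
    split_ifs with h0 h1
    · exact Nat.zero_ne_one ∘ Fin.val_eq_of_eq
    · show (0 : Fin 3) ≠ 2; decide
    · trivial
  · simp only [Function.Embedding.coeFn_mk, hf]
    split_ifs with h0 h1
    · show (1 : Fin 3) ≠ 0; decide
    · show (2 : Fin 3) ≠ 0; decide
    · trivial
  · have hadj' : (i : ℕ) % 2 ≠ (j : ℕ) % 2 := hadj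
    simp only [Function.Embedding.coeFn_mk, hf]
    split_ifs with h0 h1 h2 h3 h4 h5
    · omega
    · show (1 : Fin 3) ≠ 2; decide
    · trivial
    · show (2 : Fin 3) ≠ 1; decide
    · omega
    · trivial
    · trivial
    · trivial
    · show ((i : ℕ) - 2) % 2 ≠ ((j : ℕ) - 2) % 2
      omega
end

section
/- For k ≥ 2, consider the graph G on n vertices obtained from the Turán graph T(n,p) by embedding into each partite class a triangle-free graph that is (k−1)-regular or nearly (k−1)-regular (all degrees k−1 except one vertex of degree k−2). Then G contains no copy of Q(p,k+1) = K_1 ∨ T(p(k+1), p). -/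
open SimpleGraph

universe u v

theorem stmt4 (n p k : ℕ) (hp : 0 < p) (hk : 2 ≤ k) (H : SimpleGraph (Fin n))
    (hpart : ∀ u v : Fin n, H.Adj u v → (u : ℕ) % p = (v : ℕ) % p)
    (htf : H.CliqueFree 3)
    (hreg : ∀ i : ℕ, i < p →
      (∀ v : Fin n, (v : ℕ) % p = i → ndeg H v = k - 1) ∨
      (∃ w : Fin n, (w : ℕ) % p = i ∧ ndeg H w = k - 2 ∧
        ∀ v : Fin n, (v : ℕ) % p = i → v ≠ w → ndeg H v = k - 1)) :
    ¬ Embeds (Q p (k + 1)) (SimpleGraph.turanGraph n p ⊔ H) := by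
  classical
  rintro ⟨f, hf⟩
  set x : Fin n := f (Sum.inl ()) with hxdef
  set y : Fin (p * (k + 1)) → Fin n := fun u => f (Sum.inr u) with hydef
  have hyinj : Function.Injective y := fun a b h => Sum.inr_injective (f.injective h)
  -- forced H-adjacencies
  have hGadj : ∀ u v : Fin (p * (k + 1)), (u : ℕ) % p ≠ (v : ℕ) % p →
      (SimpleGraph.turanGraph n p ⊔ H).Adj (y u) (y v) := by
    intro u v huv
    exact hf (Sum.inr u) (Sum.inr v) huv
  have hH : ∀ u v : Fin (p * (k + 1)), (u : ℕ) % p ≠ (v : ℕ) % p →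
      ((y u : ℕ) % p = (y v : ℕ) % p) → H.Adj (y u) (y v) := by
    intro u v h1 h2
    rcases hGadj u v h1 with ht | hh
    · exact absurd h2 ht
    · exact hh
  have hHx : ∀ u : Fin (p * (k + 1)), ((y u : ℕ) % p = (x : ℕ) % p) → H.Adj x (y u) := by
    intro u h2
    have hadj := hf (Sum.inl ()) (Sum.inr u) trivial
    rcases hadj with ht | hh
    · exact absurd h2.symm ht
    · exact hh
  -- degree bound
  have hdeg : ∀ v : Fin n, ndeg H v ≤ k - 1 := by
    intro v
    rcases hreg ((v : ℕ) % p) (Nat.mod_lt _ hp) with h | ⟨w, hw, hw2, hw3⟩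
    · exact le_of_eq (h v rfl)
    · by_cases hvw : v = w
      · rw [hvw, hw2]; omega
      · exact le_of_eq (hw3 v rfl hvw)
  have hnbr : ∀ (v : Fin n) (Y : Finset (Fin n)), (∀ z ∈ Y, H.Adj v z) → Y.card ≤ k - 1 := by
    intro v Y hY
    have h1 : (Y : Set (Fin n)) ⊆ H.neighborSet v := fun z hz => hY z (by simpa using hz)
    calc Y.card = (Y : Set (Fin n)).ncard := (Set.ncard_coe_finset Y).symm
      _ ≤ (H.neighborSet v).ncard := Set.ncard_le_ncard h1 (Set.toFinite _)
      _ = ndeg H v := by rw [ndeg, Nat.card_coe_set_eq]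
      _ ≤ k - 1 := hdeg v
  -- residue classes
  set Qc : Fin (p * (k + 1)) → Fin p := fun u => ⟨(u : ℕ) % p, Nat.mod_lt _ hp⟩ with hQcdef
  set Fc : Fin (p * (k + 1)) → Fin p := fun u => ⟨((y u : Fin n) : ℕ) % p, Nat.mod_lt _ hp⟩ with hFcdef
  set i0 : Fin p := ⟨(x : ℕ) % p, Nat.mod_lt _ hp⟩ with hi0def
  have hmod : ∀ {u v : Fin (p * (k + 1))}, Qc u ≠ Qc v → (u : ℕ) % p ≠ (v : ℕ) % p := by
    intro u v h hh
    exact h (Fin.ext hh)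
  have hFeq : ∀ {u v : Fin (p * (k + 1))}, Fc u = Fc v → ((y u : Fin n) : ℕ) % p = ((y v : Fin n) : ℕ) % p :=
    fun h => congrArg Fin.val h
  have hFx : ∀ {u : Fin (p * (k + 1))}, Fc u = i0 → ((y u : Fin n) : ℕ) % p = (x : ℕ) % p :=
    fun h => congrArg Fin.val h
  set Inc : Finset (Fin p × Fin p) :=
    Finset.univ.filter (fun cf => ∃ u, Qc u = cf.1 ∧ Fc u = cf.2) with hIncdef
  set T : Fin p → ℕ := fun F => (Inc.filter (fun cf => cf.2 = F)).card with hTdef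
  set D : Fin p → ℕ := fun C => (Inc.filter (fun cf => cf.1 = C)).card with hDdef
  have memInc : ∀ u : Fin (p * (k + 1)), (Qc u, Fc u) ∈ Inc := by
    intro u
    rw [hIncdef, Finset.mem_filter]
    exact ⟨Finset.mem_univ _, ⟨u, rfl, rfl⟩⟩
  have hIncE : ∀ cf ∈ Inc, ∃ u, Qc u = cf.1 ∧ Fc u = cf.2 := by
    intro cf hcf
    rw [hIncdef, Finset.mem_filter] at hcf
    exact hcf.2
  have hpN : p ≤ p * (k + 1) := by nlinarith
  set uC : Fin p → Fin (p * (k + 1)) := fun C => ⟨C.val, lt_of_lt_of_le C.isLt hpN⟩ with huCdef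
  have hQuC : ∀ C, Qc (uC C) = C := by
    intro C
    apply Fin.ext
    show (C : ℕ) % p = C
    exact Nat.mod_eq_of_lt C.isLt
  set φ : Fin p → Fin p := fun C => Fc (uC C) with hphidef
  -- big-class lemma
  have hbig : ∀ (C : Fin p) (z : Fin n), (∀ u : Fin (p * (k + 1)), Qc u = C → H.Adj z (y u)) → False := by
    intro C z hz
    have hg : ∀ t : Fin (k + 1), (C : ℕ) + p * (t : ℕ) < p * (k + 1) := by
      intro t
      have h1 := C.isLt
      have h2 : (t : ℕ) ≤ k := Nat.lt_succ_iff.mp t.isLt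
      nlinarith
    set g : Fin (k + 1) → Fin (p * (k + 1)) := fun t => ⟨(C : ℕ) + p * (t : ℕ), hg t⟩ with hgdef
    have hQg : ∀ t, Qc (g t) = C := by
      intro t
      apply Fin.ext
      show ((C : ℕ) + p * (t : ℕ)) % p = C
      rw [Nat.add_mul_mod_self_left]
      exact Nat.mod_eq_of_lt C.isLt
    have hginj : Function.Injective g := by
      intro t t' h
      have h1 : (C : ℕ) + p * (t : ℕ) = (C : ℕ) + p * (t' : ℕ) := congrArg Fin.val h
      have h2 : p * (t : ℕ) = p * (t' : ℕ) := by omega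
      exact Fin.ext (Nat.eq_of_mul_eq_mul_left hp h2)
    set Y : Finset (Fin n) := Finset.univ.image (fun t => y (g t)) with hYdef
    have hYcard : Y.card = k + 1 := by
      have hinj2 : Function.Injective (fun t => y (g t)) := fun a b h => hginj (hyinj h)
      rw [hYdef, Finset.card_image_of_injective _ hinj2, Finset.card_univ, Fintype.card_fin]
    have hle := hnbr z Y (by
      intro w hw
      rw [hYdef, Finset.mem_image] at hw
      obtain ⟨t, _, rfl⟩ := hw
      exact hz (g t) (hQg t))
    omega
  -- each fiber over an F-class meets at most 2 Q-classes
  have hT2 : ∀ F, T F ≤ 2 := by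
    intro F
    by_contra hcon
    push_neg at hcon
    have hcon' : 2 < (Inc.filter (fun cf => cf.2 = F)).card := hcon
    set s := Inc.filter (fun cf => cf.2 = F) with hsdef
    obtain ⟨a, ha⟩ := Finset.card_pos.mp (show 0 < s.card by omega)
    obtain ⟨b, hb⟩ := Finset.card_pos.mp
      (show 0 < (s.erase a).card by rw [Finset.card_erase_of_mem ha]; omega)
    obtain ⟨c, hc⟩ := Finset.card_pos.mp
      (show 0 < ((s.erase a).erase b).card by
        rw [Finset.card_erase_of_mem hb, Finset.card_erase_of_mem ha]; omega)
    obtain ⟨hcb, hc'⟩ := Finset.mem_erase.mp hc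
    obtain ⟨hca, hcs⟩ := Finset.mem_erase.mp hc'
    obtain ⟨hba, hbs⟩ := Finset.mem_erase.mp hb
    have hmem : ∀ cf ∈ s, (∃ u, Qc u = cf.1 ∧ Fc u = cf.2) ∧ cf.2 = F := by
      intro cf hcf
      rw [hsdef, Finset.mem_filter] at hcf
      exact ⟨hIncE cf hcf.1, hcf.2⟩
    obtain ⟨⟨ua, hua1, hua2⟩, haF⟩ := hmem a ha
    obtain ⟨⟨ub, hub1, hub2⟩, hbF⟩ := hmem b hbs
    obtain ⟨⟨uc, huc1, huc2⟩, hcF⟩ := hmem c hcs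
    have hfst : ∀ {q r : Fin p × Fin p}, q ∈ s → r ∈ s → q ≠ r → q.1 ≠ r.1 := by
      intro q r hq hr hqr h1
      exact hqr (Prod.ext h1 ((hmem q hq).2.trans (hmem r hr).2.symm))
    have hab : H.Adj (y ua) (y ub) := by
      refine hH ua ub (hmod ?_) (hFeq (by rw [hua2, hub2, haF, hbF]))
      rw [hua1, hub1]
      exact Ne.symm (hfst hbs ha hba)
    have hac : H.Adj (y ua) (y uc) := by
      refine hH ua uc (hmod ?_) (hFeq (by rw [hua2, huc2, haF, hcF]))
      rw [hua1, huc1]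
      exact Ne.symm (hfst hcs ha hca)
    have hbc : H.Adj (y ub) (y uc) := by
      refine hH ub uc (hmod ?_) (hFeq (by rw [hub2, huc2, hbF, hcF]))
      rw [hub1, huc1]
      exact Ne.symm (hfst hcs hbs hcb)
    exact htf {y ua, y ub, y uc} (is3Clique_triple_iff.mpr ⟨hab, hac, hbc⟩)
  -- the fiber of the center's class meets at most 1 Q-class
  have hTi0 : T i0 ≤ 1 := by
    by_contra hcon
    push_neg at hcon
    have hcon' : 1 < (Inc.filter (fun cf => cf.2 = i0)).card := hcon
    obtain ⟨a, ha, b, hb, hab⟩ := Finset.one_lt_card.mp hcon'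
    have hmem : ∀ cf ∈ Inc.filter (fun cf => cf.2 = i0),
        (∃ u, Qc u = cf.1 ∧ Fc u = cf.2) ∧ cf.2 = i0 := by
      intro cf hcf
      rw [Finset.mem_filter] at hcf
      exact ⟨hIncE cf hcf.1, hcf.2⟩
    obtain ⟨⟨ua, hua1, hua2⟩, haF⟩ := hmem a ha
    obtain ⟨⟨ub, hub1, hub2⟩, hbF⟩ := hmem b hb
    have h1 : a.1 ≠ b.1 := fun h => hab (Prod.ext h (haF.trans hbF.symm))
    have hyab : H.Adj (y ua) (y ub) := by
      refine hH ua ub (hmod ?_) (hFeq (by rw [hua2, hub2, haF, hbF]))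
      rw [hua1, hub1]; exact h1
    have hxa : H.Adj x (y ua) := hHx ua (hFx (hua2.trans haF))
    have hxb : H.Adj x (y ub) := hHx ub (hFx (hub2.trans hbF))
    exact htf {x, y ua, y ub} (is3Clique_triple_iff.mpr ⟨hxa, hxb, hyab⟩)
  -- every Q-class is represented
  have hD1 : ∀ C, 1 ≤ D C := by
    intro C
    refine Finset.card_pos.mpr ⟨(C, φ C), Finset.mem_filter.mpr ⟨?_, rfl⟩⟩
    have := memInc (uC C)
    rwa [hQuC] at this
  -- key: a Q-class mapped into a single fiber owns it
  have hkey : ∀ C, D C = 1 → φ C ≠ i0 ∧ T (φ C) = 1 := by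
    intro C hC
    have hmemC : (C, φ C) ∈ Inc.filter (fun cf => cf.1 = C) := by
      refine Finset.mem_filter.mpr ⟨?_, rfl⟩
      have := memInc (uC C)
      rwa [hQuC] at this
    have huniq : ∀ cf ∈ Inc.filter (fun cf => cf.1 = C), cf = (C, φ C) := by
      intro cf hcf
      exact Finset.card_le_one.mp (le_of_eq hC) cf hcf (C, φ C) hmemC
    have hall : ∀ u : Fin (p * (k + 1)), Qc u = C → Fc u = φ C := by
      intro u hu
      have h1 : (Qc u, Fc u) ∈ Inc.filter (fun cf => cf.1 = C) :=
        Finset.mem_filter.mpr ⟨memInc u, hu⟩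
      have h2 := huniq _ h1
      exact congrArg Prod.snd h2
    constructor
    · intro h0
      exact hbig C x (fun u hu => hHx u (hFx ((hall u hu).trans h0)))
    · refine le_antisymm ?_ ?_
      · by_contra hcon
        push_neg at hcon
        have hcon' : 1 < (Inc.filter (fun cf => cf.2 = φ C)).card := hcon
        obtain ⟨a, ha, b, hb, hab⟩ := Finset.one_lt_card.mp hcon'
        have hmem : ∀ cf ∈ Inc.filter (fun cf => cf.2 = φ C),
            (∃ u, Qc u = cf.1 ∧ Fc u = cf.2) ∧ cf.2 = φ C := by
          intro cf hcf
          rw [Finset.mem_filter] at hcf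
          exact ⟨hIncE cf hcf.1, hcf.2⟩
        obtain ⟨⟨ua, hua1, hua2⟩, haF⟩ := hmem a ha
        obtain ⟨⟨ub, hub1, hub2⟩, hbF⟩ := hmem b hb
        have h1 : a.1 ≠ b.1 := fun h => hab (Prod.ext h (haF.trans hbF.symm))
        -- one of a.1, b.1 differs from C
        have hone : ∃ u' : Fin (p * (k + 1)), Qc u' ≠ C ∧ Fc u' = φ C := by
          by_cases haC : a.1 = C
          · exact ⟨ub, by rw [hub1, ← haC]; exact h1.symm, hub2.trans hbF⟩
          · exact ⟨ua, by rw [hua1]; exact haC, hua2.trans haF⟩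
        obtain ⟨u', hu'1, hu'2⟩ := hone
        refine hbig C (y u') (fun u hu => ?_)
        refine hH u' u (hmod (by rw [hu]; exact hu'1)) (hFeq ?_)
        rw [hu'2, hall u hu]
      · exact Finset.card_pos.mpr
          ⟨(C, φ C), Finset.mem_filter.mpr ⟨(Finset.mem_filter.mp hmemC).1, rfl⟩⟩
  -- final double counting
  have hCmem : ∀ C, (C, φ C) ∈ Inc := by
    intro C
    have := memInc (uC C)
    rwa [hQuC] at this
  set A := Finset.univ.filter (fun C => D C = 1) with hAdef
  set Ac := Finset.univ.filter (fun C => ¬ D C = 1) with hAcdef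
  set im := A.image φ with himdef
  have himT : ∀ F ∈ im, T F = 1 ∧ F ≠ i0 := by
    intro F hF
    rw [himdef, Finset.mem_image] at hF
    obtain ⟨C, hC, rfl⟩ := hF
    have h1 : D C = 1 := (Finset.mem_filter.mp hC).2
    obtain ⟨h2, h3⟩ := hkey C h1
    exact ⟨h3, h2⟩
  have hinj : Set.InjOn φ ↑A := by
    intro C1 h1 C2 h2 he
    by_contra hne
    have hd1 : D C1 = 1 := (Finset.mem_filter.mp (Finset.mem_coe.mp h1)).2
    have hk1 : T (φ C1) = 1 := (hkey C1 hd1).2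
    have hm1 : (C1, φ C1) ∈ Inc.filter (fun cf => cf.2 = φ C1) :=
      Finset.mem_filter.mpr ⟨hCmem C1, rfl⟩
    have hm2 : (C2, φ C1) ∈ Inc.filter (fun cf => cf.2 = φ C1) :=
      Finset.mem_filter.mpr ⟨by rw [he]; exact hCmem C2, rfl⟩
    have hlt : 1 < (Inc.filter (fun cf => cf.2 = φ C1)).card :=
      Finset.one_lt_card.mpr ⟨_, hm1, _, hm2, fun h => hne (congrArg Prod.fst h)⟩
    have : T (φ C1) = (Inc.filter (fun cf => cf.2 = φ C1)).card := rfl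
    omega
  have hsum1 : Inc.card = ∑ C : Fin p, D C :=
    Finset.card_eq_sum_card_fiberwise (f := Prod.fst) (fun cf _ => Finset.mem_univ _)
  have hsum2 : Inc.card = ∑ F : Fin p, T F :=
    Finset.card_eq_sum_card_fiberwise (f := Prod.snd) (fun cf _ => Finset.mem_univ _)
  have hlowA : ∑ C ∈ A, D C = A.card := by
    have h : ∀ C ∈ A, D C = 1 := fun C hC => (Finset.mem_filter.mp hC).2
    rw [Finset.sum_congr rfl h, Finset.sum_const, smul_eq_mul, mul_one]
  have hlowAc : 2 * Ac.card ≤ ∑ C ∈ Ac, D C := by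
    have h := Finset.card_nsmul_le_sum Ac D 2 (fun C hC => by
      have h1 := hD1 C
      have h2 : ¬ D C = 1 := (Finset.mem_filter.mp hC).2
      omega)
    rw [smul_eq_mul, mul_comm] at h
    exact h
  have hsplit : ∑ C ∈ A, D C + ∑ C ∈ Ac, D C = ∑ C : Fin p, D C :=
    Finset.sum_filter_add_sum_filter_not _ _ _
  have hcards : A.card + Ac.card = p := by
    have h := Finset.card_filter_add_card_filter_not
      (s := (Finset.univ : Finset (Fin p))) (p := fun C => D C = 1)
    simpa using h
  have hsub : im ⊆ Finset.univ := Finset.subset_univ _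
  have hupp1 : ∑ F ∈ Finset.univ \ im, T F + ∑ F ∈ im, T F = ∑ F : Fin p, T F :=
    Finset.sum_sdiff hsub
  have himsum : ∑ F ∈ im, T F = im.card := by
    have h : ∀ F ∈ im, T F = 1 := fun F hF => (himT F hF).1
    rw [Finset.sum_congr rfl h, Finset.sum_const, smul_eq_mul, mul_one]
  have hi0mem : i0 ∈ Finset.univ \ im :=
    Finset.mem_sdiff.mpr ⟨Finset.mem_univ _, fun h => (himT i0 h).2 rfl⟩
  have hrest : ∑ F ∈ (Finset.univ \ im).erase i0, T F + T i0 = ∑ F ∈ Finset.univ \ im, T F :=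
    Finset.sum_erase_add _ _ hi0mem
  have hrest2 : ∑ F ∈ (Finset.univ \ im).erase i0, T F ≤ 2 * ((Finset.univ \ im).card - 1) := by
    have h := Finset.sum_le_card_nsmul ((Finset.univ \ im).erase i0) T 2 (fun F _ => hT2 F)
    rw [Finset.card_erase_of_mem hi0mem, smul_eq_mul, mul_comm] at h
    exact h
  have hcard_im : im.card = A.card := by
    rw [himdef]
    exact Finset.card_image_of_injOn hinj
  have hcard_rest : (Finset.univ \ im).card = p - A.card := by
    rw [Finset.card_sdiff_of_subset hsub, Finset.card_univ, Fintype.card_fin, hcard_im]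
  have hApos : A.card ≤ p := by
    calc A.card ≤ Finset.univ.card := Finset.card_filter_le _ _
      _ = p := by rw [Finset.card_univ, Fintype.card_fin]
  have hrpos : 0 < (Finset.univ \ im).card := Finset.card_pos.mpr ⟨i0, hi0mem⟩
  omega
end
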